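/- Suppose P contains d+1 affinely independent points. Then the hyperplane distance depth D_P vanishes at infinity in the sense that D_P(q) → ∞ as ‖q‖ → ∞; that is, D_P tends to atTop along the cocompact filter on ℝ^d. -/

import Mathlib

open scoped Classical

/-- The set `S_P` of `d`-element affinely independent subsets of `P`;
each determines an affine hyperplane of `ℝ^d` (its affine span). -/
noncomputable def hddSet (d : ℕ) (P : Finset (EuclideanSpace ℝ (Fin d))) :
    Finset (Finset (EuclideanSpace ℝ (Fin d))) :=
  (P.powersetCard d).filter
    (fun s => AffineIndependent ℝ
      (fun x : (s : Set (EuclideanSpace ℝ (Fin d))) => (x : EuclideanSpace ℝ (Fin d))))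

/-- Hyperplane distance depth: the sum, over all hyperplanes determined by `P`,
of the Euclidean distance from `q` to the hyperplane. -/
noncomputable def hddDepth (d : ℕ) (P : Finset (EuclideanSpace ℝ (Fin d)))
    (q : EuclideanSpace ℝ (Fin d)) : ℝ :=
  ∑ s ∈ hddSet d P,
    Metric.infDist q
      (affineSpan ℝ (s : Set (EuclideanSpace ℝ (Fin d))) : Set (EuclideanSpace ℝ (Fin d)))

/-- If `P` contains `d+1` affinely independent points, then the hyperplane distance depth
tends to infinity as the query point goes to infinity (along the cocompact filter). -/
theorem hddDepth_tendsto_atTop_cocompact (d : ℕ) (hd : 1 ≤ d)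
    (P : Finset (EuclideanSpace ℝ (Fin d)))
    (h : ∃ a : Fin (d + 1) → EuclideanSpace ℝ (Fin d),
      AffineIndependent ℝ a ∧ ∀ i, a i ∈ P) :
    Filter.Tendsto (hddDepth d P)
      (Filter.cocompact (EuclideanSpace ℝ (Fin d))) Filter.atTop := by
  classical
  obtain ⟨a, ha, haP⟩ := h
  have hainj : Function.Injective a := ha.injective
  have htop : affineSpan ℝ (Set.range a) = ⊤ := by
    rw [ha.affineSpan_eq_top_iff_card_eq_finrank_add_one]
    simp [finrank_euclideanSpace_fin]
  let b : AffineBasis (Fin (d + 1)) ℝ (EuclideanSpace ℝ (Fin d)) := ⟨a, ha, htop⟩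
  have hb : ∀ i, b i = a i := fun i => rfl
  -- the d-element subsets obtained by deleting one point
  set s : Fin (d + 1) → Finset (EuclideanSpace ℝ (Fin d)) :=
    fun i => (Finset.univ.erase i).image a with hs
  have hmem_s : ∀ i j, a j ∈ s i ↔ j ≠ i := by
    intro i j
    simp only [hs, Finset.mem_image, Finset.mem_erase, Finset.mem_univ, and_true]
    constructor
    · rintro ⟨k, hk, hkj⟩; rwa [← hainj hkj]
    · intro hj; exact ⟨j, hj, rfl⟩
  have hscard : ∀ i, (s i).card = d := by
    intro i
    rw [hs, Finset.card_image_of_injective _ hainj,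
      Finset.card_erase_of_mem (Finset.mem_univ i)]
    simp
  have hsub_range : ∀ i, (s i : Set (EuclideanSpace ℝ (Fin d))) ⊆ Set.range a := by
    intro i x hx
    simp only [hs, Finset.coe_image] at hx
    obtain ⟨j, _, rfl⟩ := hx
    exact Set.mem_range_self j
  have hsmem : ∀ i, s i ∈ hddSet d P := by
    intro i
    rw [hddSet, Finset.mem_filter, Finset.mem_powersetCard]
    refine ⟨⟨?_, hscard i⟩, ?_⟩
    · intro x hx
      simp only [hs, Finset.mem_image] at hx
      obtain ⟨j, _, rfl⟩ := hx
      exact haP j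
    · exact ha.range.mono (hsub_range i)
  -- nonemptiness of the hyperplanes
  have hsne : ∀ i, (s i : Set (EuclideanSpace ℝ (Fin d))).Nonempty := by
    intro i
    rw [Finset.coe_nonempty, ← Finset.card_pos, hscard i]
    omega
  -- the i-th barycentric coordinate vanishes on the span of `s i`
  have hcoord_zero : ∀ i, ∀ y ∈ affineSpan ℝ (s i : Set (EuclideanSpace ℝ (Fin d))), b.coord i y = 0 := by
    intro i y hy
    have himg : (b.coord i) '' (s i : Set (EuclideanSpace ℝ (Fin d))) ⊆ {(0 : ℝ)} := by
      rintro - ⟨x, hx, rfl⟩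
      obtain ⟨j, -, rfl⟩ := hsub_range i hx
      have hji : j ≠ i := by
        have := (hmem_s i j).1 (by exact_mod_cast hx)
        exact this
      have : b.coord i (b j) = if i = j then 1 else 0 := b.coord_apply i j
      rw [hb] at this
      rw [this, if_neg (Ne.symm hji)]
      rfl
    have h1 : b.coord i y ∈ (affineSpan ℝ (s i : Set (EuclideanSpace ℝ (Fin d)))).map (b.coord i) :=
      AffineSubspace.mem_map.2 ⟨y, hy, rfl⟩
    rw [AffineSubspace.map_span] at h1
    have h2 : affineSpan ℝ ((b.coord i) '' (s i : Set (EuclideanSpace ℝ (Fin d)))) ≤ affineSpan ℝ {(0 : ℝ)} :=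
      affineSpan_mono ℝ himg
    have h3 := h2 h1
    rwa [AffineSubspace.mem_affineSpan_singleton] at h3
  -- Lipschitz-type constant for the coordinates
  let L : Fin (d + 1) → (EuclideanSpace ℝ (Fin d) →L[ℝ] ℝ) := fun i => LinearMap.toContinuousLinearMap (b.coord i).linear
  set C : ℝ := (∑ i, ‖L i‖) + 1 with hC
  have hCpos : 0 < C := by
    have : (0 : ℝ) ≤ ∑ i, ‖L i‖ := Finset.sum_nonneg fun i _ => norm_nonneg _
    linarith
  have hLC : ∀ i, ‖L i‖ ≤ C := by
    intro i
    have h1 : ‖L i‖ ≤ ∑ j, ‖L j‖ :=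
      Finset.single_le_sum (fun j _ => norm_nonneg (L j)) (Finset.mem_univ i)
    linarith
  -- distance lower bound from each coordinate
  have hdist : ∀ i q, |b.coord i q| / C ≤
      Metric.infDist q (affineSpan ℝ (s i : Set (EuclideanSpace ℝ (Fin d))) : Set (EuclideanSpace ℝ (Fin d))) := by
    intro i q
    by_contra hlt
    push_neg at hlt
    have hne : (affineSpan ℝ (s i : Set (EuclideanSpace ℝ (Fin d))) : Set (EuclideanSpace ℝ (Fin d))).Nonempty :=
      ((affineSpan_nonempty (k := ℝ)).mpr (hsne i))
    obtain ⟨y, hy, hdy⟩ := (Metric.infDist_lt_iff hne).1 hlt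
    have hy0 : b.coord i y = 0 := hcoord_zero i y hy
    have hdiff : b.coord i q - b.coord i y = (b.coord i).linear (q - y) := by
      have := (b.coord i).map_vadd y (q - y)
      simp only [vadd_eq_add] at this
      have : b.coord i q = (b.coord i).linear (q - y) + b.coord i y := by
        rw [← this]; congr 1; abel
      linarith [this]
    have hbound : |b.coord i q| ≤ C * dist q y := by
      calc |b.coord i q| = |b.coord i q - b.coord i y| := by rw [hy0, sub_zero]
        _ = |(b.coord i).linear (q - y)| := by rw [hdiff]
        _ = ‖(L i) (q - y)‖ := rfl
        _ ≤ ‖L i‖ * ‖q - y‖ := (L i).le_opNorm _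
        _ ≤ C * ‖q - y‖ := by
            apply mul_le_mul_of_nonneg_right (hLC i) (norm_nonneg _)
        _ = C * dist q y := by rw [dist_eq_norm]
    have : |b.coord i q| / C < |b.coord i q| / C := by
      calc |b.coord i q| / C ≤ dist q y := by
            rw [div_le_iff₀ hCpos]; linarith [hbound]
        _ < |b.coord i q| / C := hdy
    exact lt_irrefl _ this
  -- coercivity of the sum of coordinates
  set M : ℝ := (∑ i, ‖a i‖) + 1 with hM
  have hMpos : 0 < M := by
    have : (0 : ℝ) ≤ ∑ i, ‖a i‖ := Finset.sum_nonneg fun i _ => norm_nonneg _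
    linarith
  have hnorm_le : ∀ q : EuclideanSpace ℝ (Fin d), ‖q‖ ≤ M * ∑ i, |b.coord i q| := by
    intro q
    have habs : ∀ i : Fin (d + 1), |b.coord i q| ≤ ∑ j, |b.coord j q| := by
      intro i
      exact Finset.single_le_sum (f := fun j => |b.coord j q|)
        (fun j _ => abs_nonneg _) (Finset.mem_univ i)
    have hsum_nonneg : (0 : ℝ) ≤ ∑ j, |b.coord j q| :=
      Finset.sum_nonneg fun j _ => abs_nonneg _
    calc ‖q‖ = ‖∑ i, b.coord i q • b i‖ := by rw [b.linear_combination_coord_eq_self q]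
      _ ≤ ∑ i, ‖b.coord i q • b i‖ := norm_sum_le _ _
      _ = ∑ i, |b.coord i q| * ‖a i‖ := by
          refine Finset.sum_congr rfl fun i _ => ?_
          rw [norm_smul, hb, Real.norm_eq_abs]
      _ ≤ ∑ i, (∑ j, |b.coord j q|) * ‖a i‖ := by
          refine Finset.sum_le_sum fun i _ => ?_
          exact mul_le_mul_of_nonneg_right (habs i) (norm_nonneg _)
      _ = (∑ i, ‖a i‖) * ∑ j, |b.coord j q| := by
          rw [← Finset.mul_sum, mul_comm]
      _ ≤ M * ∑ j, |b.coord j q| := by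
          apply mul_le_mul_of_nonneg_right _ hsum_nonneg
          rw [hM]; linarith
  -- injectivity of i ↦ s i
  have hsinj : Function.Injective s := by
    intro i k hik
    by_contra hne
    have h1 : a k ∈ s i := (hmem_s i k).2 (Ne.symm hne)
    have h2 : a k ∉ s k := fun hc => ((hmem_s k k).1 hc) rfl
    rw [hik] at h1
    exact h2 h1
  -- main lower bound
  have hmain : ∀ q : EuclideanSpace ℝ (Fin d), ‖q‖ / (C * M) ≤ hddDepth d P q := by
    intro q
    have hstep1 : ∑ i, |b.coord i q| / C ≤ hddDepth d P q := by
      have hsubset : (Finset.univ.image s) ⊆ hddSet d P := by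
        intro t ht
        obtain ⟨i, -, rfl⟩ := Finset.mem_image.1 ht
        exact hsmem i
      have hsum_eq : ∑ t ∈ Finset.univ.image s,
          Metric.infDist q (affineSpan ℝ (t : Set (EuclideanSpace ℝ (Fin d))) : Set (EuclideanSpace ℝ (Fin d)))
          = ∑ i, Metric.infDist q (affineSpan ℝ (s i : Set (EuclideanSpace ℝ (Fin d))) : Set (EuclideanSpace ℝ (Fin d))) :=
        Finset.sum_image fun i _ j _ hij => hsinj hij
      have hle : ∑ t ∈ Finset.univ.image s,
          Metric.infDist q (affineSpan ℝ (t : Set (EuclideanSpace ℝ (Fin d))) : Set (EuclideanSpace ℝ (Fin d))) ≤ hddDepth d P q := by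
        apply Finset.sum_le_sum_of_subset_of_nonneg hsubset
        intro t _ _
        exact Metric.infDist_nonneg
      calc ∑ i, |b.coord i q| / C
          ≤ ∑ i, Metric.infDist q (affineSpan ℝ (s i : Set (EuclideanSpace ℝ (Fin d))) : Set (EuclideanSpace ℝ (Fin d))) :=
            Finset.sum_le_sum fun i _ => hdist i q
        _ = ∑ t ∈ Finset.univ.image s,
            Metric.infDist q (affineSpan ℝ (t : Set (EuclideanSpace ℝ (Fin d))) : Set (EuclideanSpace ℝ (Fin d))) := hsum_eq.symm
        _ ≤ hddDepth d P q := hle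
    have hstep2 : ‖q‖ / (C * M) ≤ ∑ i, |b.coord i q| / C := by
      rw [← Finset.sum_div]
      rw [div_le_div_iff₀ (by positivity) hCpos]
      have := hnorm_le q
      calc ‖q‖ * C ≤ (M * ∑ i, |b.coord i q|) * C := by
            exact mul_le_mul_of_nonneg_right this (le_of_lt hCpos)
        _ = (∑ i, |b.coord i q|) * (C * M) := by ring
    linarith
  -- conclude
  have htend : Filter.Tendsto (fun q : EuclideanSpace ℝ (Fin d) => ‖q‖ / (C * M))
      (Filter.cocompact (EuclideanSpace ℝ (Fin d))) Filter.atTop :=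
    (tendsto_norm_cocompact_atTop).atTop_div_const (by positivity)
  exact Filter.tendsto_atTop_mono hmain htend
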